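/- arXiv:2507.11078 — 2 statements merged into one kernel-verified Lean document; each statement's English description precedes it below -/
import Mathlib

section
/- (Hong's bound) If G is a graph on n vertices with no isolated vertices and e(G) edges, then the spectral radius of its adjacency matrix satisfies ρ(G) ≤ √(2e(G) - n + 1). -/
/-- The graph `K_a ∨ (K_b ∪ (n-a-b)K₁)` on vertex set `Fin n`: vertices `0..a-1` form a
clique joined to everything, vertices `a..a+b-1` form a clique, and the remaining
vertices are isolated apart from their edges to the first `a` vertices. -/
def joinGraph (n a b : ℕ) : SimpleGraph (Fin n) where
  Adj u v := u ≠ v ∧ ((u : ℕ) < a ∨ (v : ℕ) < a ∨ ((u : ℕ) < a + b ∧ (v : ℕ) < a + b))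
  symm := by
    constructor
    intro u v h
    exact ⟨h.1.symm, by tauto⟩
  loopless := by constructor; intro u h; exact h.1 rfl

/-- The adjacency spectral radius: the supremum of the (real) eigenvalues of the
adjacency matrix of `G`. -/
noncomputable def specRad {V : Type*} [Fintype V] [DecidableEq V] (G : SimpleGraph V) : ℝ :=
  letI : DecidableRel G.Adj := Classical.decRel _
  sSup {μ : ℝ | Module.End.HasEigenvalue (Matrix.toLin' (G.adjMatrix ℝ)) μ}

theorem stmt_3 {V : Type*} [Fintype V] [DecidableEq V] (G : SimpleGraph V)
    (hδ : ∀ v : V, ∃ u, G.Adj v u) :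
    specRad G ≤ Real.sqrt (2 * (G.edgeSet.ncard : ℝ) - (Fintype.card V : ℝ) + 1) := by
  letI : DecidableRel G.Adj := Classical.decRel _
  have hE : (G.edgeSet.ncard : ℝ) = (G.edgeFinset.card : ℝ) := by
    rw [← SimpleGraph.coe_edgeFinset, Set.ncard_coe_finset]
  rw [hE]
  unfold specRad
  apply Real.sSup_le _ (Real.sqrt_nonneg _)
  intro μ hμ
  obtain ⟨x, hx⟩ := hμ.exists_hasEigenvector
  set A : Matrix V V ℝ := G.adjMatrix ℝ with hA
  have hAx : A.mulVec x = μ • x := by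
    have := hx.apply_eq_smul
    simpa [Matrix.toLin'_apply] using this
  obtain ⟨v₀, hv₀⟩ : ∃ v, x v ≠ 0 := Function.ne_iff.mp hx.2
  obtain ⟨u, -, hu⟩ := Finset.exists_max_image Finset.univ (fun v => |x v|)
    ⟨v₀, Finset.mem_univ v₀⟩
  have hxu : 0 < |x u| := lt_of_lt_of_le (abs_pos.mpr hv₀) (hu v₀ (Finset.mem_univ _))
  -- (A*A) x = μ² x
  have hAAx : (A * A).mulVec x = (μ ^ 2) • x := by
    rw [← Matrix.mulVec_mulVec, hAx, Matrix.mulVec_smul, hAx, smul_smul, sq]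
  have h2 : ∑ v, (A * A) u v * x v = μ ^ 2 * x u := by
    have := congrFun hAAx u
    simpa [Matrix.mulVec, dotProduct] using this
  have hnn : ∀ v w : V, 0 ≤ (A * A) v w := by
    intro v w
    rw [Matrix.mul_apply]
    apply Finset.sum_nonneg
    intro i _
    have h1 : (0:ℝ) ≤ A v i := by simp [hA, SimpleGraph.adjMatrix_apply]; positivity
    have h2 : (0:ℝ) ≤ A i w := by simp [hA, SimpleGraph.adjMatrix_apply]; positivity
    positivity
  -- row sum of A*A at u
  have hrow : ∑ v, (A * A) u v = ∑ w ∈ G.neighborFinset u, (G.degree w : ℝ) := by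
    have h1 : ∑ v, (A * A) u v = ((A * A).mulVec (fun _ => 1)) u := by
      simp [Matrix.mulVec, dotProduct]
    rw [h1, ← Matrix.mulVec_mulVec, hA, SimpleGraph.adjMatrix_mulVec_apply]
    refine Finset.sum_congr rfl fun w _ => ?_
    simp [SimpleGraph.adjMatrix_mulVec_apply]
  -- the combinatorial bound
  have hkey : ∑ w ∈ G.neighborFinset u, G.degree w + Fintype.card V
      ≤ 2 * G.edgeFinset.card + 1 := by
    have hsplit : ∑ w ∈ Finset.univ \ G.neighborFinset u, G.degree w
        + ∑ w ∈ G.neighborFinset u, G.degree w = ∑ w, G.degree w :=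
      Finset.sum_sdiff (Finset.subset_univ _)
    have hsum : ∑ w, G.degree w = 2 * G.edgeFinset.card :=
      G.sum_degrees_eq_twice_card_edges
    have humem : u ∈ Finset.univ \ G.neighborFinset u := by
      simp [SimpleGraph.mem_neighborFinset]
    have hrest : ∑ w ∈ Finset.univ \ G.neighborFinset u, G.degree w
        = G.degree u + ∑ w ∈ (Finset.univ \ G.neighborFinset u).erase u, G.degree w :=
      (Finset.add_sum_erase _ _ humem).symm
    have hdeg1 : ∀ w : V, 1 ≤ G.degree w := fun w =>
      (G.degree_pos_iff_exists_adj w).mpr (hδ w)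
    have hlow : ((Finset.univ \ G.neighborFinset u).erase u).card
        ≤ ∑ w ∈ (Finset.univ \ G.neighborFinset u).erase u, G.degree w := by
      calc ((Finset.univ \ G.neighborFinset u).erase u).card
          = ∑ _w ∈ (Finset.univ \ G.neighborFinset u).erase u, 1 := by simp
        _ ≤ _ := Finset.sum_le_sum fun w _ => hdeg1 w
    have hcard : ((Finset.univ \ G.neighborFinset u).erase u).card
        = Fintype.card V - G.degree u - 1 := by
      rw [Finset.card_erase_of_mem humem, Finset.card_sdiff_of_subset (Finset.subset_univ _)]
      rw [Finset.card_univ, SimpleGraph.degree]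
    have hdlt : G.degree u < Fintype.card V := G.degree_lt_card_verts u
    omega
  have hrowR : ∑ w ∈ G.neighborFinset u, (G.degree w : ℝ)
      ≤ 2 * (G.edgeFinset.card : ℝ) - (Fintype.card V : ℝ) + 1 := by
    have : ((∑ w ∈ G.neighborFinset u, G.degree w : ℕ) : ℝ)
        + (Fintype.card V : ℝ) ≤ 2 * (G.edgeFinset.card : ℝ) + 1 := by
      exact_mod_cast hkey
    push_cast at this ⊢
    linarith
  -- μ² ≤ row sum
  have h3 : |μ ^ 2 * x u| ≤ (∑ v, (A * A) u v) * |x u| := by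
    calc |μ ^ 2 * x u| = |∑ v, (A * A) u v * x v| := by rw [h2]
      _ ≤ ∑ v, |(A * A) u v * x v| := Finset.abs_sum_le_sum_abs _ _
      _ = ∑ v, (A * A) u v * |x v| := by
          refine Finset.sum_congr rfl fun v _ => ?_
          rw [abs_mul, abs_of_nonneg (hnn u v)]
      _ ≤ ∑ v, (A * A) u v * |x u| := by
          refine Finset.sum_le_sum fun v _ => ?_
          exact mul_le_mul_of_nonneg_left (hu v (Finset.mem_univ _)) (hnn u v)
      _ = (∑ v, (A * A) u v) * |x u| := (Finset.sum_mul _ _ _).symm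
  have hmu2 : μ ^ 2 ≤ ∑ v, (A * A) u v := by
    have h4 : |μ ^ 2| * |x u| ≤ (∑ v, (A * A) u v) * |x u| := by
      rwa [← abs_mul]
    have h5 := le_of_mul_le_mul_right h4 hxu
    calc μ ^ 2 ≤ |μ ^ 2| := le_abs_self _
      _ ≤ _ := h5
  apply Real.le_sqrt_of_sq_le
  calc μ ^ 2 ≤ ∑ v, (A * A) u v := hmu2
    _ = ∑ w ∈ G.neighborFinset u, (G.degree w : ℝ) := hrow
    _ ≤ _ := hrowR
end

section
/- Let k ≥ 1 be an integer, and let G be a graph on at least 2k+2 vertices admitting a k-matching. If for every S ⊆ V(G) such that the induced subgraph G[S] contains a k-matching one has i(G-S) ≤ |S| - 2k (where i denotes the number of isolated vertices), then every k-matching M of G extends to a fractional perfect matching h of G with h(e) = 1 for all e ∈ M. Conversely, if G is fractional k-extendable then this condition holds. -/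
/-- `M` is a matching of size `k` in `G`: `k` pairwise vertex-disjoint edges of `G`. -/
def IsKMatching {V : Type*} (G : SimpleGraph V) (M : Finset (Sym2 V)) (k : ℕ) : Prop :=
  M.card = k ∧ (↑M : Set (Sym2 V)) ⊆ G.edgeSet ∧
    ∀ e ∈ M, ∀ f ∈ M, e ≠ f → ∀ v : V, ¬(v ∈ e ∧ v ∈ f)

/-- `h` is a fractional perfect matching of `G`: it assigns each edge a real number in
`[0,1]` (and `0` to non-edges), with the values on the edges at each vertex summing to `1`. -/
def IsFracPerfectMatching {V : Type*} [Fintype V] [DecidableEq V] (G : SimpleGraph V)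
    [DecidableRel G.Adj] (h : Sym2 V → ℝ) : Prop :=
  (∀ e, 0 ≤ h e ∧ h e ≤ 1) ∧ (∀ e, e ∉ G.edgeSet → h e = 0) ∧
    ∀ v : V, ∑ e ∈ G.incidenceFinset v, h e = 1

/-- The number of isolated vertices of `G - S`, the subgraph of `G` induced on the
complement of `S`. -/
noncomputable def isoCount {V : Type*} (G : SimpleGraph V) (S : Finset V) : ℕ :=
  {v : V | v ∉ S ∧ ∀ u, G.Adj v u → u ∈ S}.ncard

section Aux

variable {V : Type*} [Fintype V] [DecidableEq V] {G : SimpleGraph V} [DecidableRel G.Adj]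

omit [Fintype V] [DecidableRel G.Adj] in
lemma unique_edge {M : Finset (Sym2 V)} {k : ℕ} (hM : IsKMatching G M k)
    {e f : Sym2 V} (he : e ∈ M) (hf : f ∈ M) {v : V} (hve : v ∈ e) (hvf : v ∈ f) :
    e = f := by
  by_contra hne
  exact hM.2.2 e he f hf hne v ⟨hve, hvf⟩

lemma inc_eq_image (v : V) :
    G.incidenceFinset v = (G.neighborFinset v).image (fun u => s(v,u)) := by
  ext e
  simp only [SimpleGraph.mem_incidenceFinset, Finset.mem_image, SimpleGraph.mem_neighborFinset]
  constructor
  · rintro ⟨he, hv⟩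
    induction e with
    | _ a b =>
      rw [Sym2.mem_iff] at hv
      rw [SimpleGraph.mem_edgeSet] at he
      rcases hv with rfl | rfl
      · exact ⟨b, he, rfl⟩
      · exact ⟨a, he.symm, Sym2.eq_swap⟩
  · rintro ⟨u, hadj, rfl⟩
    exact ⟨hadj, Sym2.mem_mk_left v u⟩

lemma sum_inc (v : V) (h : Sym2 V → ℝ) :
    ∑ e ∈ G.incidenceFinset v, h e = ∑ u ∈ G.neighborFinset v, h s(v,u) := by
  rw [inc_eq_image, Finset.sum_image]
  intro a ha b hb hab
  rw [Finset.mem_coe, SimpleGraph.mem_neighborFinset] at ha hb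
  rcases (Sym2.mk_eq_mk_iff (p := (v,a)) (q := (v,b))).mp hab with h1 | h1 <;>
    simp only [Prod.swap_prod_mk, Prod.mk.injEq] at h1
  · exact h1.2
  · rcases h1 with ⟨rfl, rfl⟩; exact (G.irrefl ha).elim

lemma edge_filter_card {e : Sym2 V} (he : e ∈ G.edgeSet) :
    (Finset.univ.filter (· ∈ e)).card = 2 := by
  induction e with
  | _ a b =>
    have hab : a ≠ b := (G.mem_edgeSet.mp he).ne
    have h2 : Finset.univ.filter (· ∈ s(a,b)) = {a, b} := by
      ext v; simp [Sym2.mem_iff]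
    rw [h2, Finset.card_insert_of_notMem (by simp [hab]), Finset.card_singleton]

lemma W_card {M : Finset (Sym2 V)} {k : ℕ} (hM : IsKMatching G M k) :
    (Finset.univ.filter (fun v => ∃ e ∈ M, v ∈ e)).card = 2 * k := by
  have h1 : Finset.univ.filter (fun v => ∃ e ∈ M, v ∈ e)
      = M.biUnion (fun e => Finset.univ.filter (· ∈ e)) := by
    ext v; simp
  rw [h1, Finset.card_biUnion]
  · rw [Finset.sum_congr rfl (fun e he => edge_filter_card (hM.2.1 he)),
      Finset.sum_const, hM.1, smul_eq_mul, mul_comm]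
  · intro e he f hf hef
    simp only [Function.onFun]
    rw [Finset.disjoint_filter]
    intro v _ hv1 hv2
    exact hM.2.2 e he f hf hef v ⟨hv1, hv2⟩

end Aux

section Forward

variable {V : Type*} [Fintype V] [DecidableEq V] {G : SimpleGraph V} [DecidableRel G.Adj]

open Classical in
/-- partner function: for `v` covered by `M`, the other endpoint of its `M`-edge. -/
noncomputable def pfn (M : Finset (Sym2 V)) : V → V := fun v =>
  if h : ∃ e ∈ M, v ∈ e then Sym2.Mem.other' h.choose_spec.2 else v

omit [Fintype V] [DecidableRel G.Adj] in
lemma pfn_edge {M : Finset (Sym2 V)} {v : V} (h : ∃ e ∈ M, v ∈ e) :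
    s(v, pfn M v) ∈ M := by
  rw [pfn, dif_pos h, Sym2.other_spec' h.choose_spec.2]
  exact h.choose_spec.1

omit [Fintype V] [DecidableRel G.Adj] in
lemma pfn_eq {M : Finset (Sym2 V)} {k : ℕ} (hM : IsKMatching G M k) {a b : V}
    (hab : s(a,b) ∈ M) : pfn M a = b := by
  have hex : ∃ e ∈ M, a ∈ e := ⟨_, hab, Sym2.mem_mk_left a b⟩
  have h1 : s(a, pfn M a) ∈ M := pfn_edge hex
  have h2 : s(a, pfn M a) = s(a,b) :=
    unique_edge hM h1 hab (Sym2.mem_mk_left _ _) (Sym2.mem_mk_left _ _)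
  exact Sym2.congr_right.mp h2

omit [Fintype V] [DecidableRel G.Adj] in
lemma pfn_mem_W {M : Finset (Sym2 V)} {v : V} (h : ∃ e ∈ M, v ∈ e) :
    ∃ e ∈ M, pfn M v ∈ e := ⟨_, pfn_edge h, Sym2.mem_mk_right _ _⟩

omit [Fintype V] [DecidableRel G.Adj] in
lemma pfn_adj {M : Finset (Sym2 V)} {k : ℕ} (hM : IsKMatching G M k) {v : V}
    (h : ∃ e ∈ M, v ∈ e) : G.Adj v (pfn M v) :=
  G.mem_edgeSet.mp (hM.2.1 (pfn_edge h))

omit [Fintype V] [DecidableRel G.Adj] in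
lemma pfn_invol {M : Finset (Sym2 V)} {k : ℕ} (hM : IsKMatching G M k) {v : V}
    (h : ∃ e ∈ M, v ∈ e) : pfn M (pfn M v) = v :=
  pfn_eq hM (Sym2.eq_swap ▸ pfn_edge h)

open Classical in
/-- Hall relation: matched vertices must go to their partner; unmatched vertices to
unmatched neighbors. -/
noncomputable def rfn (G : SimpleGraph V) (M : Finset (Sym2 V)) : V → Finset V := fun v =>
  if ∃ e ∈ M, v ∈ e then {pfn M v}
  else Finset.univ.filter (fun u => G.Adj v u ∧ ¬ ∃ e ∈ M, u ∈ e)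

lemma forward {k : ℕ}
    (hS : ∀ S : Finset V,
        (∃ M : Finset (Sym2 V), IsKMatching G M k ∧ ∀ e ∈ M, ∀ v ∈ e, v ∈ S) →
          (isoCount G S : ℤ) ≤ (S.card : ℤ) - 2 * k)
    (M : Finset (Sym2 V)) (hM : IsKMatching G M k) :
    ∃ h : Sym2 V → ℝ, IsFracPerfectMatching G h ∧ ∀ e ∈ M, h e = 1 := by
  classical
  set W := Finset.univ.filter (fun v => ∃ e ∈ M, v ∈ e) with hWdef
  have hWcard : W.card = 2 * k := W_card hM
  set r := rfn G M with hrdef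
  have hrW : ∀ v, (∃ e ∈ M, v ∈ e) → r v = {pfn M v} := by
    intro v h; rw [hrdef, rfn, if_pos h]
  have hrT : ∀ v, ¬(∃ e ∈ M, v ∈ e) →
      r v = Finset.univ.filter (fun u => G.Adj v u ∧ ¬ ∃ e ∈ M, u ∈ e) := by
    intro v h
    rw [hrdef, rfn, if_neg h]
    exact Finset.filter_congr_decidable _ _ _
  -- Hall condition for unmatched sets
  have hall_T : ∀ B : Finset V, (∀ v ∈ B, ¬∃ e ∈ M, v ∈ e) →
      B.card ≤ (B.biUnion r).card := by
    intro B hB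
    set N := B.biUnion r with hN
    set B' := B.filter (fun v => v ∉ N) with hB'
    set N' := B'.biUnion r with hN'
    set S := N' ∪ W with hSdef
    have hMS : ∃ M' : Finset (Sym2 V), IsKMatching G M' k ∧ ∀ e ∈ M', ∀ v ∈ e, v ∈ S :=
      ⟨M, hM, fun e he v hv =>
        Finset.mem_union_right _ (Finset.mem_filter.mpr ⟨Finset.mem_univ v, ⟨e, he, hv⟩⟩)⟩
    have hiso := hS S hMS
    have hsub : (B' : Set V) ⊆ {v : V | v ∉ S ∧ ∀ u, G.Adj v u → u ∈ S} := by
      intro v hv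
      rw [Finset.mem_coe, hB', Finset.mem_filter] at hv
      obtain ⟨hvB, hvN⟩ := hv
      constructor
      · intro hvS
        rcases Finset.mem_union.mp hvS with h1 | h1
        · exact hvN (Finset.biUnion_subset_biUnion_of_subset_left r
            (Finset.filter_subset _ _) h1)
        · exact hB v hvB (by simpa [hWdef] using h1)
      · intro u hu
        by_cases huW : ∃ e ∈ M, u ∈ e
        · exact Finset.mem_union_right _ (by simp [hWdef, huW])
        · refine Finset.mem_union_left _ ?_
          refine Finset.mem_biUnion.mpr ⟨v, Finset.mem_filter.mpr ⟨hvB, hvN⟩, ?_⟩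
          rw [hrT v (hB v hvB)]
          simp only [Finset.mem_filter, Finset.mem_univ, true_and]
          exact ⟨hu, huW⟩
    have hB'le : (B'.card : ℤ) ≤ (isoCount G S : ℤ) := by
      have h1 := Set.ncard_le_ncard hsub (Set.toFinite _)
      rw [Set.ncard_coe_finset] at h1
      exact_mod_cast h1
    have hScard : (S.card : ℤ) ≤ (N'.card : ℤ) + 2 * k := by
      have h1 := Finset.card_union_le N' W
      rw [hWcard] at h1
      exact_mod_cast h1
    have key : B'.card ≤ N'.card := by
      have := hiso
      omega
    have hdisj : Disjoint N' (B.filter (fun v => v ∈ N)) := by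
      rw [Finset.disjoint_left]
      intro b hbN' hbB
      obtain ⟨v, hvB', hbr⟩ := Finset.mem_biUnion.mp hbN'
      obtain ⟨hvB, hvnN⟩ := Finset.mem_filter.mp hvB'
      have hvT := hB v hvB
      rw [hrT v hvT] at hbr
      simp only [Finset.mem_filter, Finset.mem_univ, true_and] at hbr
      obtain ⟨hadj, hbT⟩ := hbr
      have hbB2 := (Finset.mem_filter.mp hbB).1
      apply hvnN
      refine Finset.mem_biUnion.mpr ⟨b, hbB2, ?_⟩
      rw [hrT b hbT]
      simp only [Finset.mem_filter, Finset.mem_univ, true_and]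
      exact ⟨hadj.symm, hvT⟩
    have hsub2 : N' ∪ B.filter (fun v => v ∈ N) ⊆ N := by
      apply Finset.union_subset
      · exact Finset.biUnion_subset_biUnion_of_subset_left r (Finset.filter_subset _ _)
      · intro x hx
        exact (Finset.mem_filter.mp hx).2
    calc B.card = (B.filter (fun v => v ∈ N)).card + (B.filter (fun v => v ∉ N)).card :=
          (Finset.card_filter_add_card_filter_not _).symm
      _ = (B.filter (fun v => v ∈ N)).card + B'.card := rfl
      _ ≤ (B.filter (fun v => v ∈ N)).card + N'.card := by omega
      _ = (N' ∪ B.filter (fun v => v ∈ N)).card := by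
          rw [Finset.card_union_of_disjoint hdisj]; omega
      _ ≤ N.card := Finset.card_le_card hsub2
  -- full Hall condition
  have hall : ∀ A : Finset V, A.card ≤ (A.biUnion r).card := by
    intro A
    set U := A.biUnion r with hU
    set AW := A.filter (fun v => ∃ e ∈ M, v ∈ e) with hAW
    set AT := A.filter (fun v => ¬∃ e ∈ M, v ∈ e) with hAT
    have h1 : AW.card ≤ (U.filter (fun v => ∃ e ∈ M, v ∈ e)).card := by
      apply Finset.card_le_card_of_injOn (pfn M)
      · intro v hv
        obtain ⟨hvA, hvW⟩ := Finset.mem_filter.mp hv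
        refine Finset.mem_filter.mpr ⟨?_, pfn_mem_W hvW⟩
        refine Finset.mem_biUnion.mpr ⟨v, hvA, ?_⟩
        rw [hrW v hvW]
        exact Finset.mem_singleton_self _
      · intro a ha b hb hab
        have haW := (Finset.mem_filter.mp ha).2
        have hbW := (Finset.mem_filter.mp hb).2
        have := congrArg (pfn M) hab
        rwa [pfn_invol hM haW, pfn_invol hM hbW] at this
    have h2 : AT.card ≤ (U.filter (fun v => ¬∃ e ∈ M, v ∈ e)).card := by
      refine le_trans (hall_T AT (fun v hv => (Finset.mem_filter.mp hv).2))
        (Finset.card_le_card ?_)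
      intro u hu
      obtain ⟨v, hv, hur⟩ := Finset.mem_biUnion.mp hu
      have hvT := (Finset.mem_filter.mp hv).2
      rw [hrT v hvT] at hur
      simp only [Finset.mem_filter, Finset.mem_univ, true_and] at hur
      refine Finset.mem_filter.mpr ⟨?_, hur.2⟩
      refine Finset.mem_biUnion.mpr ⟨v, (Finset.mem_filter.mp hv).1, ?_⟩
      rw [hrT v hvT]
      simp only [Finset.mem_filter, Finset.mem_univ, true_and]
      exact hur
    have h3 : A.card = AW.card + AT.card :=
      (Finset.card_filter_add_card_filter_not _).symm
    have h4 : (U.filter (fun v => ∃ e ∈ M, v ∈ e)).card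
        + (U.filter (fun v => ¬∃ e ∈ M, v ∈ e)).card = U.card :=
      Finset.card_filter_add_card_filter_not _
    omega
  obtain ⟨f, hfinj, hfr⟩ := (Finset.all_card_le_biUnion_card_iff_exists_injective r).mp hall
  have hfadj : ∀ v, G.Adj v (f v) := by
    intro v
    have hv := hfr v
    by_cases h : ∃ e ∈ M, v ∈ e
    · rw [hrW v h, Finset.mem_singleton] at hv
      rw [hv]
      exact pfn_adj hM h
    · rw [hrT v h] at hv
      simp only [Finset.mem_filter, Finset.mem_univ, true_and] at hv
      exact hv.1
  have hfsurj : Function.Surjective f := Finite.surjective_of_injective hfinj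
  -- define the fractional matching
  set hh : Sym2 V → ℝ := fun e =>
    if e ∈ G.edgeSet then
      Sym2.lift ⟨fun a b => ((if f a = b then (1:ℝ) else 0) + (if f b = a then 1 else 0))/2,
        fun a b => by simp [add_comm]⟩ e
    else 0 with hhdef
  have hval : ∀ a b, G.Adj a b → hh s(a,b)
      = ((if f a = b then (1:ℝ) else 0) + (if f b = a then 1 else 0))/2 := by
    intro a b hab
    rw [hhdef]
    simp only
    rw [if_pos (G.mem_edgeSet.mpr hab), Sym2.lift_mk]
  have hzero : ∀ e, e ∉ G.edgeSet → hh e = 0 := by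
    intro e he
    rw [hhdef]
    simp only
    rw [if_neg he]
  refine ⟨hh, ⟨?_, hzero, ?_⟩, ?_⟩
  · -- bounds
    intro e
    by_cases he : e ∈ G.edgeSet
    · induction e with
      | _ a b =>
        rw [hval a b (G.mem_edgeSet.mp he)]
        constructor <;> split_ifs <;> norm_num
    · rw [hzero e he]; norm_num
  · -- vertex sums
    intro v
    rw [sum_inc]
    rw [Finset.sum_congr rfl (fun u hu => hval v u ((G.mem_neighborFinset _ _).mp hu))]
    rw [← Finset.sum_div, Finset.sum_add_distrib]
    have h1 : ∑ u ∈ G.neighborFinset v, (if f v = u then (1:ℝ) else 0) = 1 := by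
      rw [Finset.sum_ite_eq]
      rw [if_pos ((G.mem_neighborFinset _ _).mpr (hfadj v))]
    have h2 : ∑ u ∈ G.neighborFinset v, (if f u = v then (1:ℝ) else 0) = 1 := by
      obtain ⟨u₀, hu₀⟩ := hfsurj v
      have hcongr : ∀ u ∈ G.neighborFinset v, (if f u = v then (1:ℝ) else 0)
          = (if u₀ = u then 1 else 0) := by
        intro u _
        congr 1
        simp only [eq_iff_iff]
        constructor
        · intro h; exact hfinj (hu₀.trans h.symm)
        · rintro rfl; exact hu₀
      rw [Finset.sum_congr rfl hcongr, Finset.sum_ite_eq]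
      rw [if_pos ((G.mem_neighborFinset _ _).mpr ((hu₀ ▸ hfadj u₀).symm))]
    rw [h1, h2]
    norm_num
  · -- M edges
    intro e he
    have heE := hM.2.1 he
    induction e with
    | _ a b =>
      have hadj : G.Adj a b := G.mem_edgeSet.mp heE
      have hfa : f a = b := by
        have hex : ∃ e' ∈ M, a ∈ e' := ⟨_, he, Sym2.mem_mk_left a b⟩
        have hv := hfr a
        rw [hrW a hex, Finset.mem_singleton] at hv
        rw [hv, pfn_eq hM he]
      have hfb : f b = a := by
        have hba : s(b,a) ∈ M := Sym2.eq_swap ▸ he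
        have hex : ∃ e' ∈ M, b ∈ e' := ⟨_, hba, Sym2.mem_mk_left b a⟩
        have hv := hfr b
        rw [hrW b hex, Finset.mem_singleton] at hv
        rw [hv, pfn_eq hM hba]
      rw [hval a b hadj, hfa, hfb]
      norm_num

end Forward

section Backward

variable {V : Type*} [Fintype V] [DecidableEq V] {G : SimpleGraph V} [DecidableRel G.Adj]

lemma backward {k : ℕ}
    (hext : ∀ M : Finset (Sym2 V), IsKMatching G M k →
        ∃ h : Sym2 V → ℝ, IsFracPerfectMatching G h ∧ ∀ e ∈ M, h e = 1)
    (S : Finset V)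
    (hMS : ∃ M : Finset (Sym2 V), IsKMatching G M k ∧ ∀ e ∈ M, ∀ v ∈ e, v ∈ S) :
    (isoCount G S : ℤ) ≤ (S.card : ℤ) - 2 * k := by
  classical
  obtain ⟨M, hM, hMin⟩ := hMS
  obtain ⟨h, ⟨hb, h0, hsum⟩, hM1⟩ := hext M hM
  set W := Finset.univ.filter (fun v => ∃ e ∈ M, v ∈ e) with hWdef
  have hWcard : W.card = 2 * k := W_card hM
  have hWS : W ⊆ S := by
    intro v hv
    obtain ⟨e, he, hve⟩ := (Finset.mem_filter.mp hv).2
    exact hMin e he v hve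
  set I := Finset.univ.filter (fun v => v ∉ S ∧ ∀ u, G.Adj v u → u ∈ S) with hIdef
  have hIiso : isoCount G S = I.card := by
    rw [isoCount, show {v : V | v ∉ S ∧ ∀ u, G.Adj v u → u ∈ S} = (I : Set V) by
      ext v; simp [hIdef]]
    exact Set.ncard_coe_finset _
  have hzeroW : ∀ u, (∃ e ∈ M, u ∈ e) → ∀ e ∈ G.incidenceFinset u, e ∉ M → h e = 0 := by
    intro u hu e heInc heM
    obtain ⟨m, hm, hum⟩ := hu
    have hmInc : m ∈ G.incidenceFinset u := (G.mem_incidenceFinset u m).mpr ⟨hM.2.1 hm, hum⟩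
    have hErase : ∑ e' ∈ (G.incidenceFinset u).erase m, h e' = 0 := by
      have hs := hsum u
      rw [← Finset.add_sum_erase _ h hmInc, hM1 m hm] at hs
      linarith
    refine (Finset.sum_eq_zero_iff_of_nonneg (fun e' _ => (hb e').1)).mp hErase e ?_
    exact Finset.mem_erase.mpr ⟨fun hcontra => heM (hcontra ▸ hm), heInc⟩
  have hIdisj : ∀ v ∈ I, ∀ v' ∈ I, v ≠ v' →
      Disjoint (G.incidenceFinset v) (G.incidenceFinset v') := by
    intro v hv v' hv' hne
    rw [Finset.disjoint_left]
    intro e he he'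
    have h1 := (G.mem_incidenceFinset v e).mp he
    have h2 := (G.mem_incidenceFinset v' e).mp he'
    have hee := G.incidenceSet_inter_incidenceSet_subset hne ⟨h1, h2⟩
    rw [Set.mem_singleton_iff] at hee
    subst hee
    have hadj : G.Adj v v' := G.mem_edgeSet.mp h1.1
    have hv'S := ((Finset.mem_filter.mp hv).2.2) v' hadj
    exact ((Finset.mem_filter.mp hv').2.1) hv'S
  set E0 := I.biUnion (fun v => G.incidenceFinset v) with hE0
  have hpd : Set.PairwiseDisjoint (I : Set V) (fun v => G.incidenceFinset v) :=
    fun v hv v' hv' hne => hIdisj v hv v' hv' hne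
  have step1 : (I.card : ℝ) = ∑ e ∈ E0, h e := by
    rw [hE0, Finset.sum_biUnion hpd,
      Finset.sum_congr rfl (fun v _ => hsum v), Finset.sum_const, nsmul_eq_mul, mul_one]
  set E1 := E0.filter (fun e => h e ≠ 0) with hE1
  have step2 : ∑ e ∈ E0, h e = ∑ e ∈ E1, h e := by
    rw [hE1]
    exact (Finset.sum_filter_ne_zero _).symm
  have hE1mem : ∀ e ∈ E1, ∃ u ∈ S \ W, e ∈ G.incidenceFinset u := by
    intro e he
    obtain ⟨heE0, hne⟩ := Finset.mem_filter.mp he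
    obtain ⟨v, hvI, hinc⟩ := Finset.mem_biUnion.mp heE0
    obtain ⟨heEdge, hve⟩ := (G.mem_incidenceFinset v e).mp hinc
    set u := Sym2.Mem.other' hve with hudef
    have hspec : s(v, u) = e := Sym2.other_spec' hve
    have hadj : G.Adj v u := G.mem_edgeSet.mp (hspec ▸ heEdge)
    have hvS : v ∉ S := (Finset.mem_filter.mp hvI).2.1
    have huS : u ∈ S := (Finset.mem_filter.mp hvI).2.2 u hadj
    have heM : e ∉ M := fun hcontra => hvS (hMin e hcontra v hve)
    have hue : u ∈ e := hspec ▸ Sym2.mem_mk_right v u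
    have heIncU : e ∈ G.incidenceFinset u := (G.mem_incidenceFinset u e).mpr ⟨heEdge, hue⟩
    have huW : u ∉ W := by
      intro huW
      exact hne (hzeroW u (Finset.mem_filter.mp huW).2 e heIncU heM)
    exact ⟨u, Finset.mem_sdiff.mpr ⟨huS, huW⟩, heIncU⟩
  have hE1sub : E1 ⊆ (S \ W).biUnion (fun u => (G.incidenceFinset u) ∩ E1) := by
    intro e he
    obtain ⟨u, hu, hinc⟩ := hE1mem e he
    exact Finset.mem_biUnion.mpr ⟨u, hu, Finset.mem_inter.mpr ⟨hinc, he⟩⟩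
  have hpd2 : Set.PairwiseDisjoint ((S \ W : Finset V) : Set V)
      (fun u => (G.incidenceFinset u) ∩ E1) := by
    intro u hu u' hu' hne
    rw [Function.onFun, Finset.disjoint_left]
    intro e he he'
    have h1 := Finset.mem_inter.mp he
    have h2 := Finset.mem_inter.mp he'
    have hee := G.incidenceSet_inter_incidenceSet_subset hne
      ⟨(G.mem_incidenceFinset u e).mp h1.1, (G.mem_incidenceFinset u' e).mp h2.1⟩
    rw [Set.mem_singleton_iff] at hee
    obtain ⟨heE0, _⟩ := Finset.mem_filter.mp h1.2
    obtain ⟨v, hvI, hincv⟩ := Finset.mem_biUnion.mp heE0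
    have hve := ((G.mem_incidenceFinset v e).mp hincv).2
    have hvS : v ∉ S := (Finset.mem_filter.mp hvI).2.1
    rw [hee, Sym2.mem_iff] at hve
    have huS := (Finset.mem_sdiff.mp hu).1
    have hu'S := (Finset.mem_sdiff.mp hu').1
    rcases hve with rfl | rfl
    · exact hvS huS
    · exact hvS hu'S
  have step3 : ∑ e ∈ E1, h e ≤ ∑ u ∈ S \ W, ∑ e ∈ G.incidenceFinset u, h e :=
    calc ∑ e ∈ E1, h e
        ≤ ∑ e ∈ (S \ W).biUnion (fun u => G.incidenceFinset u ∩ E1), h e :=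
          Finset.sum_le_sum_of_subset_of_nonneg hE1sub (fun e _ _ => (hb e).1)
      _ = ∑ u ∈ S \ W, ∑ e ∈ G.incidenceFinset u ∩ E1, h e := Finset.sum_biUnion hpd2
      _ ≤ ∑ u ∈ S \ W, ∑ e ∈ G.incidenceFinset u, h e :=
          Finset.sum_le_sum (fun u _ => Finset.sum_le_sum_of_subset_of_nonneg
            Finset.inter_subset_left (fun e _ _ => (hb e).1))
  have step4 : ∑ u ∈ S \ W, ∑ e ∈ G.incidenceFinset u, h e = ((S \ W).card : ℝ) := by
    rw [Finset.sum_congr rfl (fun u _ => hsum u), Finset.sum_const, nsmul_eq_mul, mul_one]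
  have hfinal : I.card ≤ (S \ W).card := by
    have hreal : (I.card : ℝ) ≤ ((S \ W).card : ℝ) := by
      rw [step1, step2]
      exact step3.trans_eq step4
    exact_mod_cast hreal
  have hcardSW : (S \ W).card = S.card - 2 * k := by rw [Finset.card_sdiff_of_subset hWS, hWcard]
  have h2k : 2 * k ≤ S.card := hWcard ▸ Finset.card_le_card hWS
  rw [hIiso]
  omega

end Backward

theorem stmt_18 {V : Type*} [Fintype V] [DecidableEq V] (G : SimpleGraph V)
    [DecidableRel G.Adj] (k : ℕ) (hk : 1 ≤ k) (hcard : 2 * k + 2 ≤ Fintype.card V)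
    (hM : ∃ M : Finset (Sym2 V), IsKMatching G M k) :
    (∀ S : Finset V,
        (∃ M : Finset (Sym2 V), IsKMatching G M k ∧ ∀ e ∈ M, ∀ v ∈ e, v ∈ S) →
          (isoCount G S : ℤ) ≤ (S.card : ℤ) - 2 * k) ↔
      (∀ M : Finset (Sym2 V), IsKMatching G M k →
        ∃ h : Sym2 V → ℝ, IsFracPerfectMatching G h ∧ ∀ e ∈ M, h e = 1) := by
  exact ⟨fun hS => forward hS, fun hext => backward hext⟩
end
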